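/- arXiv:math-ph/0007042 — 12 statements merged into one kernel-verified Lean document; each statement's English description precedes it below -/
import Mathlib

section
/- Explicit solution of the matrix ODE Ü = 2a U̇ + b U + c U̇ U⁻¹ U̇ in the special case c = 1, a ≠ 0: let a, b be complex scalars with a ≠ 0, let M₀ be an invertible k×k complex matrix and N an arbitrary k×k complex matrix, and define M(t) = exp{ (b/(2a)) · ( −t + e^{a t} a⁻¹ sinh(a t) ) } · exp{ e^{a t} a⁻¹ sinh(a t) · N } · M₀. Then M(t) is invertible for every real t, M(0) = M₀, Ṁ(0) = N M₀, and M satisfies the matrix ODE M̈(t) = 2a Ṁ(t) + b M(t) + Ṁ(t) M(t)⁻¹ Ṁ(t) for all t. -/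
open Matrix

section auxExp

attribute [local instance] Matrix.linftyOpSemiNormedRing Matrix.linftyOpNormedRing
  Matrix.linftyOpNormedAlgebra

theorem expDeriv_slope_aux (k : ℕ) (N : Matrix (Fin k) (Fin k) ℂ) (z : ℂ) :
    Filter.Tendsto (slope (fun u : ℂ => NormedSpace.exp (u • N)) z) (nhdsWithin z {z}ᶜ)
      (nhds (N * NormedSpace.exp (z • N))) := by
  have h := hasDerivAt_exp_smul_const' (𝕂 := ℂ) N z
  rwa [hasDerivAt_iff_tendsto_slope] at h

end auxExp

attribute [local instance] Matrix.normedAddCommGroup Matrix.normedSpace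

noncomputable section

theorem expDeriv_aux (k : ℕ) (N : Matrix (Fin k) (Fin k) ℂ) (z : ℂ) :
    HasDerivAt (fun u : ℂ => NormedSpace.exp (u • N)) (N * NormedSpace.exp (z • N)) z := by
  exact hasDerivAt_iff_tendsto_slope.mpr (expDeriv_slope_aux k N z)

/-- Explicit solution of the matrix ODE `Ü = 2a U̇ + b U + c U̇ U⁻¹ U̇` in the case `c = 1`,
`a ≠ 0` (equations (3.5) of the paper). -/
theorem solution_matrix_ODE_c_eq_one (k : ℕ) (a b : ℂ) (ha : a ≠ 0)
    (M₀ N : Matrix (Fin k) (Fin k) ℂ) (hM₀ : IsUnit M₀)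
    (φ : ℝ → ℂ)
    (hφ : ∀ t : ℝ, φ t = Complex.exp (a * t) * a⁻¹ * Complex.sinh (a * t))
    (M : ℝ → Matrix (Fin k) (Fin k) ℂ)
    (hM : ∀ t : ℝ, M t =
      Complex.exp (b / (2 * a) * (-(t : ℂ) + φ t)) •
        (NormedSpace.exp (φ t • N) * M₀)) :
    (∀ t : ℝ, IsUnit (M t)) ∧
    M 0 = M₀ ∧
    (∀ t : ℝ, DifferentiableAt ℝ M t) ∧
    deriv M 0 = N * M₀ ∧
    ∀ t : ℝ, HasDerivAt (deriv M)
      ((2 * a) • deriv M t + b • M t + deriv M t * (M t)⁻¹ * deriv M t) t := by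
  have ha2 : (2 : ℂ) * a ≠ 0 := mul_ne_zero two_ne_zero ha
  have hφ0 : φ 0 = 0 := by rw [hφ]; simp
  -- key scalar identity
  have hφ2 : ∀ t : ℝ, 2 * a * φ t = Complex.exp (2 * a * t) - 1 := by
    intro t
    rw [hφ]
    simp only [Complex.sinh, Complex.exp_neg]
    have hne : Complex.exp (a * t) ≠ 0 := Complex.exp_ne_zero _
    have h2 : Complex.exp (2 * a * t) = Complex.exp (a * t) * Complex.exp (a * t) := by
      rw [← Complex.exp_add]; ring_nf
    field_simp
    rw [h2]
    ring
  have hφ3 : ∀ t : ℝ, φ t = (Complex.exp (2 * a * t) - 1) / (2 * a) := by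
    intro t
    rw [eq_div_iff ha2]
    linear_combination hφ2 t
  -- derivative of t ↦ (t : ℂ)
  have hid : ∀ t : ℝ, HasDerivAt (fun s : ℝ => (s : ℂ)) 1 t := by
    intro t
    simpa using (hasDerivAt_id t).ofReal_comp
  -- derivative of t ↦ exp (2 a t)
  have hexp2 : ∀ t : ℝ, HasDerivAt (fun s : ℝ => Complex.exp (2 * a * s))
      (2 * a * Complex.exp (2 * a * t)) t := by
    intro t
    have h1 : HasDerivAt (fun s : ℝ => 2 * a * (s : ℂ)) (2 * a) t := by
      simpa using (hid t).const_mul (2 * a)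
    simpa [mul_comm] using h1.cexp
  -- derivative of φ
  have hφd : ∀ t : ℝ, HasDerivAt φ (Complex.exp (2 * a * t)) t := by
    intro t
    have h1 : HasDerivAt (fun s : ℝ => (Complex.exp (2 * a * s) - 1) / (2 * a))
        ((2 * a * Complex.exp (2 * a * t)) / (2 * a)) t := ((hexp2 t).sub_const 1).div_const _
    have h2 : φ = fun s : ℝ => (Complex.exp (2 * a * s) - 1) / (2 * a) := funext hφ3
    rw [h2]
    convert h1 using 1
    field_simp
  -- the matrix exponential factor and its derivative
  set E : ℝ → Matrix (Fin k) (Fin k) ℂ := fun s => NormedSpace.exp (φ s • N) with hE_def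
  have hEd : ∀ t : ℝ, HasDerivAt E (Complex.exp (2 * a * t) • (N * E t)) t := by
    intro t
    have h1 := (expDeriv_aux k N (φ t)).scomp t (hφd t)
    exact h1
  -- the scalar factor and its derivative
  set c : ℝ → ℂ := fun s => Complex.exp (b / (2 * a) * (-(s : ℂ) + φ s)) with hc_def
  have hcd : ∀ t : ℝ, HasDerivAt c (c t * (b * φ t)) t := by
    intro t
    have h1 : HasDerivAt (fun s : ℝ => b / (2 * a) * (-(s : ℂ) + φ s))
        (b / (2 * a) * (-1 + Complex.exp (2 * a * t))) t :=
      (((hid t).neg).add (hφd t)).const_mul _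
    have h2 : b / (2 * a) * (-1 + Complex.exp (2 * a * t)) = b * φ t := by
      rw [hφ3 t]; ring
    rw [← h2]
    exact h1.cexp
  -- right multiplication by M₀ as a continuous linear map
  let R : Matrix (Fin k) (Fin k) ℂ →L[ℂ] Matrix (Fin k) (Fin k) ℂ :=
    LinearMap.toContinuousLinearMap (LinearMap.mulRight ℂ M₀)
  let L : Matrix (Fin k) (Fin k) ℂ →L[ℂ] Matrix (Fin k) (Fin k) ℂ :=
    LinearMap.toContinuousLinearMap (LinearMap.mulLeft ℂ N)
  -- g
  set g : ℝ → Matrix (Fin k) (Fin k) ℂ :=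
    fun s => (b * φ s) • (1 : Matrix (Fin k) (Fin k) ℂ) + Complex.exp (2 * a * s) • N
    with hg_def
  -- first derivative of M
  have hMd : ∀ t : ℝ, HasDerivAt M (g t * M t) t := by
    intro t
    have hEM : HasDerivAt (fun s => E s * M₀) (Complex.exp (2 * a * t) • (N * E t) * M₀) t := by
      have := ((R.restrictScalars ℝ).hasFDerivAt (x := E t)).comp_hasDerivAt t (hEd t)
      exact this
    have h1 := (hcd t).smul hEM
    have h2 : M = fun s => c s • (E s * M₀) := funext fun s => hM s
    rw [h2]
    refine h1.congr_deriv (Eq.symm ?_)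
    show g t * (c t • (E t * M₀)) = _
    rw [hg_def]
    simp only [Matrix.add_mul, smul_mul_assoc, mul_smul_comm, smul_smul, one_mul,
      Matrix.mul_assoc]
    module
  have hderiv : ∀ t : ℝ, deriv M t = g t * M t := fun t => (hMd t).deriv
  -- invertibility
  have hunit : ∀ t : ℝ, IsUnit (M t) := by
    intro t
    rw [hM t]
    rw [Algebra.smul_def]
    exact ((isUnit_iff_ne_zero.mpr (Complex.exp_ne_zero _)).map
      (algebraMap ℂ (Matrix (Fin k) (Fin k) ℂ))).mul ((Matrix.isUnit_exp _).mul hM₀)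
  have hMMinv : ∀ t : ℝ, M t * (M t)⁻¹ = 1 := fun t =>
    Matrix.mul_nonsing_inv _ ((Matrix.isUnit_iff_isUnit_det _).mp (hunit t))
  -- M 0 = M₀
  have hM0 : M 0 = M₀ := by
    rw [hM 0, hφ0]
    simp [NormedSpace.exp_zero]
  refine ⟨hunit, hM0, fun t => (hMd t).differentiableAt, ?_, ?_⟩
  · rw [hderiv 0, hM0, hg_def]
    simp [hφ0, Matrix.add_mul, Matrix.smul_mul]
  · intro t
    have h2 : deriv M = fun s => (b * φ s) • M s + Complex.exp (2 * a * s) • (N * M s) := by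
      funext s
      rw [hderiv s, hg_def]
      simp only [Matrix.add_mul, smul_mul_assoc, one_mul]
    have hNM : HasDerivAt (fun s => N * M s) (N * (g t * M t)) t := by
      have := ((L.restrictScalars ℝ).hasFDerivAt (x := M t)).comp_hasDerivAt t (hMd t)
      exact this
    have hD := (((hφd t).const_mul b).smul (hMd t)).add ((hexp2 t).smul hNM)
    have hval : (2 * a) • deriv M t + b • M t + deriv M t * (M t)⁻¹ * deriv M t
        = (b * φ t) • (g t * M t) + (b * Complex.exp (2 * a * t)) • M t +
          (Complex.exp (2 * a * t) • (N * (g t * M t)) +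
            (2 * a * Complex.exp (2 * a * t)) • (N * M t)) := by
      rw [hderiv t]
      have hinv : g t * M t * (M t)⁻¹ * (g t * M t) = g t * (g t * M t) := by
        rw [Matrix.mul_assoc (g t) (M t) (M t)⁻¹, hMMinv t, Matrix.mul_one]
      rw [hinv]
      have he : Complex.exp (2 * a * t) = 2 * a * φ t + 1 := by
        rw [hφ2 t]; ring
      rw [hg_def]
      simp only [he, Matrix.add_mul, smul_mul_assoc, mul_smul_comm, one_mul,
        Matrix.mul_add, smul_smul, smul_add, Matrix.mul_assoc]
      module
    rw [hval, h2]
    exact hD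
end
end

section
/- Linearization of the matrix Riccati equation: let f, g, h, v, y : ℝ → (k×k complex matrices) be differentiable, with y(t)h(t) invertible for all t, and let M : ℝ → (k×k complex matrices) be twice differentiable with M(t) invertible for all t. If M satisfies the linear ODE M̈ = ( ẏ h + y ḣ + y h f ) (y h)⁻¹ Ṁ − y h g v M, then the matrix W(t) := −( y(t) h(t) )⁻¹ Ṁ(t) M(t)⁻¹ satisfies the matrix Riccati equation Ẇ = g v + f W + W y h W. -/
open Matrix

attribute [local instance] Matrix.normedAddCommGroup Matrix.normedSpace

noncomputable section

/-- Entrywise characterization of `HasDerivAt` for matrix-valued functions. -/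
theorem hasDerivAt_matrix {k : ℕ} {A : ℝ → Matrix (Fin k) (Fin k) ℂ}
    {A' : Matrix (Fin k) (Fin k) ℂ} {t : ℝ} :
    HasDerivAt A A' t ↔ ∀ i j, HasDerivAt (fun s => A s i j) (A' i j) t := by
  constructor
  · intro hA i j
    exact (hasDerivAt_pi.mp ((hasDerivAt_pi (φ' := A')).mp hA i)) j
  · intro hA
    exact (hasDerivAt_pi (φ' := A')).mpr fun i => hasDerivAt_pi.mpr fun j => hA i j

/-- Product rule for matrix-valued functions (sup-norm instances). -/
theorem HasDerivAt.matrixMul {k : ℕ} {A B : ℝ → Matrix (Fin k) (Fin k) ℂ}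
    {A' B' : Matrix (Fin k) (Fin k) ℂ} {t : ℝ}
    (hA : HasDerivAt A A' t) (hB : HasDerivAt B B' t) :
    HasDerivAt (fun s => A s * B s) (A' * B t + A t * B') t := by
  rw [hasDerivAt_matrix] at hA hB ⊢
  intro i j
  simp only [Matrix.mul_apply, Matrix.add_apply]
  rw [← Finset.sum_add_distrib]
  exact HasDerivAt.fun_sum fun l _ => ((hA i l).mul (hB l j))

theorem differentiableAt_matrix_det {k : ℕ} {A : ℝ → Matrix (Fin k) (Fin k) ℂ} {t : ℝ}
    (hA : ∀ i j, DifferentiableAt ℝ (fun s => A s i j) t) :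
    DifferentiableAt ℝ (fun s => (A s).det) t := by
  have : (fun s => (A s).det)
      = fun s => ∑ σ : Equiv.Perm (Fin k),
          ((Equiv.Perm.sign σ : ℤ) : ℂ) * ∏ i, A s (σ i) i := by
    funext s
    rw [Matrix.det_apply']
  rw [this]
  exact DifferentiableAt.fun_sum fun σ _ =>
    (differentiableAt_const _).mul (DifferentiableAt.fun_finsetProd fun i _ => hA (σ i) i)

/-- Derivative of the pointwise inverse of a matrix-valued function. -/
theorem hasDerivAt_matrix_inv {k : ℕ} {M : ℝ → Matrix (Fin k) (Fin k) ℂ}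
    {p : Matrix (Fin k) (Fin k) ℂ} {t : ℝ}
    (hMd : HasDerivAt M p t) (hMu : ∀ s, IsUnit (M s)) :
    HasDerivAt (fun s => (M s)⁻¹) (-((M t)⁻¹ * p * (M t)⁻¹)) t := by
  have hdet : ∀ s, IsUnit (M s).det := fun s => (Matrix.isUnit_iff_isUnit_det _).mp (hMu s)
  have hdet0 : (M t).det ≠ 0 := by
    simpa [isUnit_iff_ne_zero] using hdet t
  have hent : ∀ i j, DifferentiableAt ℝ (fun s => M s i j) t := fun i j =>
    ((hasDerivAt_matrix.mp hMd) i j).differentiableAt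
  have hdetd : DifferentiableAt ℝ (fun s => (M s).det) t := differentiableAt_matrix_det hent
  have hadj : ∀ i j, DifferentiableAt ℝ (fun s => (M s).adjugate i j) t := by
    intro i j
    simp only [Matrix.adjugate_apply]
    apply differentiableAt_matrix_det
    intro i' j'
    simp only [Matrix.updateRow_apply]
    by_cases hij : i' = j
    · simp [hij]
    · simpa [hij] using hent i' j'
  have hNent : ∀ i j, DifferentiableAt ℝ (fun s => (M s)⁻¹ i j) t := by
    intro i j
    have heq : (fun s => (M s)⁻¹ i j) = fun s => ((M s).det)⁻¹ * (M s).adjugate i j := by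
      funext s
      rw [Matrix.inv_def]
      simp [Matrix.smul_apply, Ring.inverse_eq_inv', smul_eq_mul]
    rw [heq]
    exact (hdetd.inv hdet0).mul (hadj i j)
  have hN : DifferentiableAt ℝ (fun s => (M s)⁻¹) t := by
    exact differentiableAt_pi.mpr fun i => differentiableAt_pi.mpr fun j => hNent i j
  have hNd := hN.hasDerivAt
  set d := deriv (fun s => (M s)⁻¹) t with hd
  have hprod := hMd.matrixMul hNd
  have hone : (fun s => M s * (M s)⁻¹) = fun _ => (1 : Matrix (Fin k) (Fin k) ℂ) :=
    funext fun s => Matrix.mul_nonsing_inv _ (hdet s)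
  rw [hone] at hprod
  have h0 : p * (M t)⁻¹ + M t * d = 0 := hprod.unique (hasDerivAt_const t 1)
  have hMd' : M t * d = -(p * (M t)⁻¹) := by
    have := eq_neg_of_add_eq_zero_right h0
    linear_combination (norm := abel) this
  have hfinal : d = -((M t)⁻¹ * p * (M t)⁻¹) := by
    have : (M t)⁻¹ * (M t * d) = (M t)⁻¹ * -(p * (M t)⁻¹) := by rw [hMd']
    rwa [← mul_assoc, Matrix.nonsing_inv_mul _ (hdet t), one_mul, mul_neg, ← mul_assoc] at this
  rw [← hfinal]
  exact hNd

/-- Linearization of the matrix Riccati equation (equations (3.13a), (3.18), (3.19) of the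
paper): if `M` solves the linear ODE `M̈ = (ẏ h + y ḣ + y h f)(y h)⁻¹ Ṁ − y h g v M`, then
`W := −(y h)⁻¹ Ṁ M⁻¹` solves the Riccati equation `Ẇ = g v + f W + W y h W`. -/
theorem matrix_riccati_linearization (k : ℕ)
    (f g h v y : ℝ → Matrix (Fin k) (Fin k) ℂ)
    (hf : Differentiable ℝ f) (hg : Differentiable ℝ g)
    (hh : Differentiable ℝ h) (hv : Differentiable ℝ v)
    (hy : Differentiable ℝ y)
    (hyh : ∀ t, IsUnit (y t * h t))
    (M M' M'' : ℝ → Matrix (Fin k) (Fin k) ℂ)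
    (hMinv : ∀ t, IsUnit (M t))
    (hM : ∀ t, HasDerivAt M (M' t) t)
    (hM' : ∀ t, HasDerivAt M' (M'' t) t)
    (hODE : ∀ t, M'' t =
      (deriv y t * h t + y t * deriv h t + y t * h t * f t) * (y t * h t)⁻¹ * M' t
        - y t * h t * g t * v t * M t)
    (W : ℝ → Matrix (Fin k) (Fin k) ℂ)
    (hW : ∀ t, W t = -((y t * h t)⁻¹ * (M' t * (M t)⁻¹))) :
    ∀ t, HasDerivAt W (g t * v t + f t * W t + W t * (y t * h t) * W t) t := by
  intro t
  have hWfun : W = fun s => -((y s * h s)⁻¹ * (M' s * (M s)⁻¹)) := funext hW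
  rw [hWfun]
  have hAd : HasDerivAt (fun s => y s * h s) (deriv y t * h t + y t * deriv h t) t :=
    ((hy t).hasDerivAt).matrixMul ((hh t).hasDerivAt)
  have hAinv : HasDerivAt (fun s => (y s * h s)⁻¹)
      (-((y t * h t)⁻¹ * (deriv y t * h t + y t * deriv h t) * (y t * h t)⁻¹)) t :=
    hasDerivAt_matrix_inv hAd hyh
  have hMinvd : HasDerivAt (fun s => (M s)⁻¹) (-((M t)⁻¹ * M' t * (M t)⁻¹)) t :=
    hasDerivAt_matrix_inv (hM t) hMinv
  have hmain := (hAinv.matrixMul ((hM' t).matrixMul hMinvd)).fun_neg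
  refine hmain.congr_deriv (Eq.symm ?_)
  simp only [hODE t]
  have hdetA : IsUnit (y t * h t).det := (Matrix.isUnit_iff_isUnit_det _).mp (hyh t)
  have hdetM : IsUnit (M t).det := (Matrix.isUnit_iff_isUnit_det _).mp (hMinv t)
  set A := y t * h t with hA
  set D := deriv y t * h t + y t * deriv h t with hD
  set m := M t with hm
  set p := M' t with hp
  have c1 : ∀ X : Matrix (Fin k) (Fin k) ℂ, A⁻¹ * (A * X) = X := fun X => by
    rw [← mul_assoc, Matrix.nonsing_inv_mul _ hdetA, one_mul]
  have c2 : ∀ X : Matrix (Fin k) (Fin k) ℂ, A * (A⁻¹ * X) = X := fun X => by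
    rw [← mul_assoc, Matrix.mul_nonsing_inv _ hdetA, one_mul]
  have c3 : m * m⁻¹ = 1 := Matrix.mul_nonsing_inv _ hdetM
  simp only [mul_add, add_mul, sub_mul, mul_sub, neg_mul, mul_neg, neg_neg, neg_add,
    neg_sub, mul_assoc, c1, c2, c3, mul_one, one_mul]
  abel
end
end

section
/- Reduction of the coupled system (3.34a) to a single equation: let a, b and c₁,…,c_N be complex scalars, and let U₁,…,U_N : ℝ → (k×k complex matrices) be twice differentiable functions satisfying, for each n, Ü_n = 2a U̇_n + b U_n + 2[U̇_n, F] + [U_n, Ḟ] − 2a[U_n, F] − [[U_n, F], F], where F(t) := Σ_{m=1}^{N} c_m U_m(t). Then the matrix F satisfies the single uncoupled ODE F̈ = 2a Ḟ + b F + [Ḟ, F]. -/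
open Matrix

attribute [local instance] Matrix.normedAddCommGroup Matrix.normedSpace

noncomputable section

/-- Reduction of the coupled system (3.34a) of the paper to the single uncoupled
equation (3.34c): if each `U_n` satisfies
`Ü_n = 2a U̇_n + b U_n + 2[U̇_n,F] + [U_n,Ḟ] − 2a[U_n,F] − [[U_n,F],F]`
with `F = Σ c_m U_m`, then `F̈ = 2a Ḟ + b F + [Ḟ, F]`. -/
theorem coupled_system_reduces_to_single (k N : ℕ) (a b : ℂ) (c : Fin N → ℂ)
    (U U' U'' : Fin N → ℝ → Matrix (Fin k) (Fin k) ℂ)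
    (hU : ∀ n t, HasDerivAt (U n) (U' n t) t)
    (hU' : ∀ n t, HasDerivAt (U' n) (U'' n t) t)
    (F F' : ℝ → Matrix (Fin k) (Fin k) ℂ)
    (hF : ∀ t, F t = ∑ m, c m • U m t)
    (hF' : ∀ t, F' t = ∑ m, c m • U' m t)
    (hODE : ∀ n t, U'' n t =
      (2 * a) • U' n t + b • U n t
        + (2 : ℂ) • (U' n t * F t - F t * U' n t)
        + (U n t * F' t - F' t * U n t)
        - (2 * a) • (U n t * F t - F t * U n t)
        - ((U n t * F t - F t * U n t) * F t - F t * (U n t * F t - F t * U n t))) :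
    (∀ t, HasDerivAt F (F' t) t) ∧
    ∀ t, HasDerivAt F' ((2 * a) • F' t + b • F t + (F' t * F t - F t * F' t)) t := by
  have hFdef : F = fun t => ∑ m, c m • U m t := funext hF
  have hF'def : F' = fun t => ∑ m, c m • U' m t := funext hF'
  have h1 : ∀ t, HasDerivAt F (F' t) t := by
    intro t
    rw [hFdef, hF' t]
    exact HasDerivAt.fun_sum fun m _ => (hU m t).const_smul (c m)
  refine ⟨h1, fun t => ?_⟩
  have h2 : HasDerivAt F' (∑ m, c m • U'' m t) t := by
    rw [hF'def]
    exact HasDerivAt.fun_sum fun m _ => (hU' m t).const_smul (c m)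
  convert h2 using 1
  set S := F t with hS
  set S' := F' t with hS'
  have expand : ∀ n, c n • U'' n t =
      (2 * a) • (c n • U' n t) + b • (c n • U n t)
        + (2 : ℂ) • ((c n • U' n t) * S - S * (c n • U' n t))
        + ((c n • U n t) * S' - S' * (c n • U n t))
        - (2 * a) • ((c n • U n t) * S - S * (c n • U n t))
        - (((c n • U n t) * S - S * (c n • U n t)) * S
            - S * ((c n • U n t) * S - S * (c n • U n t))) := by
    intro n
    rw [hODE n t]
    simp only [smul_add, smul_sub, smul_mul_assoc, mul_smul_comm, sub_mul, mul_sub,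
      mul_assoc]
    module
  have hsum : ∑ m, c m • U'' m t =
      (2 * a) • S' + b • S
        + (2 : ℂ) • (S' * S - S * S')
        + (S * S' - S' * S)
        - (2 * a) • (S * S - S * S)
        - ((S * S - S * S) * S - S * (S * S - S * S)) := by
    rw [Finset.sum_congr rfl fun n _ => expand n]
    simp only [Finset.sum_add_distrib, Finset.sum_sub_distrib, ← Finset.smul_sum,
      ← Finset.sum_mul, ← Finset.mul_sum, ← hF t, ← hF' t, ← hS, ← hS']
  rw [hsum, sub_self]
  simp only [smul_zero, zero_mul, mul_zero, sub_zero]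
  module
end
end

section
/- Lax-type reduction of the nonabelian Toda lattice: let γ be a complex scalar and let G_n : ℝ → (k×k complex matrices), indexed by n, be twice differentiable with G_n(t) invertible for all t, satisfying the nonabelian Toda equations G̈_n = Ġ_n G_n⁻¹ Ġ_n + γ { G_{n+1} − G_n G_{n−1}⁻¹ G_n }. Define A_n := G_n⁻¹ G_{n+1} and B_n := G_n⁻¹ Ġ_n. Then Ȧ_n = A_n B_{n+1} − B_n A_n and Ḃ_n = γ ( A_n − A_{n−1} ). -/
noncomputable section ltAux
open Matrix
attribute [local instance] Matrix.linftyOpNormedAddCommGroup Matrix.linftyOpNormedRing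
  Matrix.linftyOpNormedAlgebra Matrix.linftyOpNormedSpace

private lemma toda_inv_deriv (k : ℕ) (f f' : ℝ → Matrix (Fin k) (Fin k) ℂ)
    (hu : ∀ s, IsUnit (f s)) (t : ℝ) (hf : HasDerivAt f (f' t) t) :
    HasDerivAt (fun s => (f s)⁻¹) (-((f t)⁻¹ * f' t * (f t)⁻¹)) t := by
  have h1 : HasDerivAt (fun s => Ring.inverse (f s))
      ((-(ContinuousLinearMap.mulLeftRight ℂ _ ↑(hu t).unit⁻¹ ↑(hu t).unit⁻¹)) (f' t)) t := by
    have := (hasFDerivAt_ringInverse (𝕜 := ℂ) (hu t).unit)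
    rw [(hu t).unit_spec] at this
    exact (this.restrictScalars ℝ).comp_hasDerivAt t hf
  have hcoe : (↑(hu t).unit⁻¹ : Matrix (Fin k) (Fin k) ℂ) = (f t)⁻¹ := by
    rw [Matrix.coe_units_inv, (hu t).unit_spec]
  have heq : (fun s => Ring.inverse (f s)) = fun s => (f s)⁻¹ := by
    funext s; exact (Matrix.nonsing_inv_eq_ringInverse (A := f s)).symm
  rw [heq] at h1
  convert h1 using 1
  rw [ContinuousLinearMap.neg_apply, ContinuousLinearMap.mulLeftRight_apply, hcoe]

private lemma toda_aux (k : ℕ) (γ : ℂ)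
    (G G' G'' : ℤ → ℝ → Matrix (Fin k) (Fin k) ℂ)
    (hGinv : ∀ n t, IsUnit (G n t))
    (hG : ∀ n t, Filter.Tendsto (slope (G n) t) (nhdsWithin t {t}ᶜ) (nhds (G' n t)))
    (hG' : ∀ n t, Filter.Tendsto (slope (G' n) t) (nhdsWithin t {t}ᶜ) (nhds (G'' n t)))
    (hODE : ∀ n t, G'' n t = G' n t * (G n t)⁻¹ * G' n t
      + γ • (G (n + 1) t - G n t * (G (n - 1) t)⁻¹ * G n t))
    (A B : ℤ → ℝ → Matrix (Fin k) (Fin k) ℂ)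
    (hA : ∀ n t, A n t = (G n t)⁻¹ * G (n + 1) t)
    (hB : ∀ n t, B n t = (G n t)⁻¹ * G' n t) :
    (∀ n t, Filter.Tendsto (slope (A n) t) (nhdsWithin t {t}ᶜ)
        (nhds (A n t * B (n + 1) t - B n t * A n t))) ∧
    (∀ n t, Filter.Tendsto (slope (B n) t) (nhdsWithin t {t}ᶜ)
        (nhds (γ • (A n t - A (n - 1) t)))) := by
  replace hG : ∀ n t, HasDerivAt (G n) (G' n t) t :=
    fun n t => hasDerivAt_iff_tendsto_slope.mpr (hG n t)
  replace hG' : ∀ n t, HasDerivAt (G' n) (G'' n t) t :=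
    fun n t => hasDerivAt_iff_tendsto_slope.mpr (hG' n t)
  suffices H : (∀ n t, HasDerivAt (A n) (A n t * B (n + 1) t - B n t * A n t) t) ∧
      (∀ n t, HasDerivAt (B n) (γ • (A n t - A (n - 1) t)) t) from
    ⟨fun n t => hasDerivAt_iff_tendsto_slope.mp (H.1 n t),
      fun n t => hasDerivAt_iff_tendsto_slope.mp (H.2 n t)⟩
  have hgl : ∀ n t, (G n t)⁻¹ * G n t = 1 :=
    fun n t => Matrix.nonsing_inv_mul _ ((Matrix.isUnit_iff_isUnit_det _).mp (hGinv n t))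
  have hgr : ∀ n t, G n t * (G n t)⁻¹ = 1 :=
    fun n t => Matrix.mul_nonsing_inv _ ((Matrix.isUnit_iff_isUnit_det _).mp (hGinv n t))
  have hinv : ∀ n t, HasDerivAt (fun s => (G n s)⁻¹)
      (-((G n t)⁻¹ * G' n t * (G n t)⁻¹)) t :=
    fun n t => toda_inv_deriv k (G n) (G' n) (hGinv n) t (hG n t)
  constructor
  · intro n t
    have h := (hinv n t).mul (hG (n + 1) t)
    have hfun : ((fun s => (G n s)⁻¹) * G (n + 1)) = A n := by
      funext s; exact (hA n s).symm
    rw [hfun] at h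
    refine h.congr_deriv (Eq.symm ?_)
    rw [hA, hB, hB]
    have : (G n t)⁻¹ * G (n + 1) t * ((G (n + 1) t)⁻¹ * G' (n + 1) t)
        = (G n t)⁻¹ * G' (n + 1) t := by
      rw [mul_assoc, ← mul_assoc (G (n+1) t), hgr, one_mul]
    rw [this]
    noncomm_ring
  · intro n t
    have h := (hinv n t).mul (hG' n t)
    have hfun : ((fun s => (G n s)⁻¹) * G' n) = B n := by
      funext s; exact (hB n s).symm
    rw [hfun] at h
    refine h.congr_deriv (Eq.symm ?_)
    rw [hODE, hA, hA]
    have hsub : (n : ℤ) - 1 + 1 = n := by ring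
    rw [hsub]
    rw [mul_add, Matrix.mul_smul, mul_sub]
    have h1 : (G n t)⁻¹ * (G' n t * (G n t)⁻¹ * G' n t)
        = (G n t)⁻¹ * G' n t * (G n t)⁻¹ * G' n t := by noncomm_ring
    have h2 : (G n t)⁻¹ * (G n t * (G (n - 1) t)⁻¹ * G n t)
        = (G (n - 1) t)⁻¹ * G n t := by
      rw [← mul_assoc, ← mul_assoc, hgl, one_mul]
    rw [h1, h2]
    simp only [neg_mul]
    abel

end ltAux



open Matrix

attribute [local instance] Matrix.normedAddCommGroup Matrix.normedSpace

noncomputable section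

/-- Lax-type reduction of the nonabelian Toda lattice (equations (3.38), (3.40), (3.41) of
the paper): if `G̈_n = Ġ_n G_n⁻¹ Ġ_n + γ(G_{n+1} − G_n G_{n−1}⁻¹ G_n)`, then
`A_n := G_n⁻¹ G_{n+1}` and `B_n := G_n⁻¹ Ġ_n` satisfy
`Ȧ_n = A_n B_{n+1} − B_n A_n` and `Ḃ_n = γ(A_n − A_{n−1})`. -/
theorem nonabelian_toda_lax_reduction (k : ℕ) (γ : ℂ)
    (G G' G'' : ℤ → ℝ → Matrix (Fin k) (Fin k) ℂ)
    (hGinv : ∀ n t, IsUnit (G n t))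
    (hG : ∀ n t, HasDerivAt (G n) (G' n t) t)
    (hG' : ∀ n t, HasDerivAt (G' n) (G'' n t) t)
    (hODE : ∀ n t, G'' n t = G' n t * (G n t)⁻¹ * G' n t
      + γ • (G (n + 1) t - G n t * (G (n - 1) t)⁻¹ * G n t))
    (A B : ℤ → ℝ → Matrix (Fin k) (Fin k) ℂ)
    (hA : ∀ n t, A n t = (G n t)⁻¹ * G (n + 1) t)
    (hB : ∀ n t, B n t = (G n t)⁻¹ * G' n t) :
    (∀ n t, HasDerivAt (A n) (A n t * B (n + 1) t - B n t * A n t) t) ∧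
    (∀ n t, HasDerivAt (B n) (γ • (A n t - A (n - 1) t)) t) := by
  obtain ⟨h1, h2⟩ := toda_aux k γ G G' G'' hGinv
    (fun n t => by exact hasDerivAt_iff_tendsto_slope.mp (hG n t))
    (fun n t => by exact hasDerivAt_iff_tendsto_slope.mp (hG' n t))
    hODE A B hA hB
  constructor
  · intro n t
    exact hasDerivAt_iff_tendsto_slope.mpr (h1 n t)
  · intro n t
    exact hasDerivAt_iff_tendsto_slope.mpr (h2 n t)
end
end

section
/- Linearizable second-order equation from the integrable first-order lattice: let c be a complex scalar and let A_n : ℝ → (k×k complex matrices), indexed by n, be differentiable functions satisfying Ȧ_n = c ( A_{n−1} A_n − A_n A_{n+1} ). Let U_n : ℝ → (k×k complex matrices) be differentiable with U_n(t) invertible for all t and U̇_n = A_n U_n. Then each U_n is twice differentiable and satisfies Ü_n = U̇_n U_n⁻¹ U̇_n + c { U̇_{n−1} U_{n−1}⁻¹ U̇_n − U̇_n U_n⁻¹ U̇_{n+1} U_{n+1}⁻¹ U_n }. -/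
open Matrix

attribute [local instance] Matrix.normedAddCommGroup Matrix.normedSpace

noncomputable section

lemma matmul_hasDerivAt {k : ℕ} {f g : ℝ → Matrix (Fin k) (Fin k) ℂ}
    {f' g' : Matrix (Fin k) (Fin k) ℂ} {t : ℝ}
    (hf : HasDerivAt f f' t) (hg : HasDerivAt g g' t) :
    HasDerivAt (fun s => f s * g s) (f' * g t + f t * g') t := by
  have hfe : ∀ a b, HasDerivAt (fun s => f s a b) (f' a b) t := fun a b =>
    (hasDerivAt_pi.mp ((hasDerivAt_pi.mp hf) a)) b
  have hge : ∀ a b, HasDerivAt (fun s => g s a b) (g' a b) t := fun a b =>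
    (hasDerivAt_pi.mp ((hasDerivAt_pi.mp hg) a)) b
  apply hasDerivAt_pi.mpr
  intro i
  apply hasDerivAt_pi.mpr
  intro j
  have : HasDerivAt (fun s => ∑ l, f s i l * g s l j)
      (∑ l, (f' i l * g t l j + f t i l * g' l j)) t :=
    HasDerivAt.fun_sum fun l _ => (hfe i l).mul (hge l j)
  simpa [Matrix.mul_apply, Matrix.add_apply, Finset.sum_add_distrib] using this

/-- Derivation of the linearizable matrix evolution equation (3.43c) from the integrable
first-order lattice (3.43a) via the position (3.43b) of the paper: if
`Ȧ_n = c(A_{n−1} A_n − A_n A_{n+1})` and `U̇_n = A_n U_n` with `U_n` invertible, then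
`Ü_n = U̇_n U_n⁻¹ U̇_n + c { U̇_{n−1} U_{n−1}⁻¹ U̇_n − U̇_n U_n⁻¹ U̇_{n+1} U_{n+1}⁻¹ U_n }`. -/
theorem lattice_second_order_linearizable (k : ℕ) (c : ℂ)
    (A : ℤ → ℝ → Matrix (Fin k) (Fin k) ℂ)
    (hA : ∀ n t, HasDerivAt (A n) (c • (A (n - 1) t * A n t - A n t * A (n + 1) t)) t)
    (U : ℤ → ℝ → Matrix (Fin k) (Fin k) ℂ)
    (hUinv : ∀ n t, IsUnit (U n t))
    (hU : ∀ n t, HasDerivAt (U n) (A n t * U n t) t) :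
    ∀ n t, HasDerivAt (fun s => A n s * U n s)
      ((A n t * U n t) * (U n t)⁻¹ * (A n t * U n t)
        + c • ((A (n - 1) t * U (n - 1) t) * (U (n - 1) t)⁻¹ * (A n t * U n t)
          - (A n t * U n t) * (U n t)⁻¹ * (A (n + 1) t * U (n + 1) t)
            * (U (n + 1) t)⁻¹ * U n t)) t := by
  intro n t
  have hinv : ∀ m, U m t * (U m t)⁻¹ = 1 := fun m =>
    Matrix.mul_nonsing_inv _ ((Matrix.isUnit_iff_isUnit_det _).mp (hUinv m t))
  have hs : ∀ m (X : Matrix (Fin k) (Fin k) ℂ), U m t * ((U m t)⁻¹ * X) = X := fun m X => by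
    rw [← Matrix.mul_assoc, hinv, Matrix.one_mul]
  have := matmul_hasDerivAt (hA n t) (hU n t)
  convert this using 1
  simp only [Matrix.mul_assoc, hs, Matrix.smul_mul, Matrix.sub_mul]
  abel
end
end

section
/- Linearization of the matrix equation (3.44): let α, β, γ, c be complex scalars with c ≠ 0, and let V : ℝ → (k×k complex matrices) be three times differentiable with V(t) invertible for all t, satisfying the linear ODE V⃛ = c α V + β V̇ + γ V̈. Then the matrix U(t) := c⁻¹ V(t)⁻¹ V̇(t) satisfies Ü = α·1 + β U + γ ( U̇ + c U² ) − c ( U̇ U + 2 U U̇ + c U³ ), where 1 denotes the identity matrix. -/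
open Matrix

attribute [local instance] Matrix.normedAddCommGroup Matrix.normedSpace

noncomputable section

lemma entry' {A : ℝ → Matrix (Fin k) (Fin k) ℂ} {A' : Matrix (Fin k) (Fin k) ℂ} {t : ℝ}
    (h : HasDerivAt A A' t) (i j : Fin k) :
    HasDerivAt (fun s => A s i j) (A' i j) t :=
  hasDerivAt_pi.1 (hasDerivAt_pi.1 h i) j

lemma ofEntries' {A : ℝ → Matrix (Fin k) (Fin k) ℂ} {A' : Matrix (Fin k) (Fin k) ℂ} {t : ℝ}
    (h : ∀ i j, HasDerivAt (fun s => A s i j) (A' i j) t) :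
    HasDerivAt A A' t :=
  hasDerivAt_pi.2 fun i => hasDerivAt_pi.2 fun j => h i j

lemma mulDeriv' {A B : ℝ → Matrix (Fin k) (Fin k) ℂ} {A' B' : Matrix (Fin k) (Fin k) ℂ} {t : ℝ}
    (hA : HasDerivAt A A' t) (hB : HasDerivAt B B' t) :
    HasDerivAt (fun s => A s * B s) (A' * B t + A t * B') t := by
  apply ofEntries'
  intro i j
  have : ∀ s, (A s * B s) i j = ∑ l, A s i l * B s l j := fun s => Matrix.mul_apply
  simp only [this]
  have h := HasDerivAt.fun_sum (fun l (_ : l ∈ Finset.univ) =>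
    (entry' hA i l).mul (entry' hB l j))
  convert h using 1
  · rfl
  all_goals simp [Matrix.add_apply, Matrix.mul_apply, Finset.sum_add_distrib]

lemma detDiff' {A : ℝ → Matrix (Fin k) (Fin k) ℂ} {t : ℝ}
    (h : ∀ i j, DifferentiableAt ℝ (fun s => A s i j) t) :
    DifferentiableAt ℝ (fun s => (A s).det) t := by
  have : ∀ s, (A s).det = ∑ σ : Equiv.Perm (Fin k), Equiv.Perm.sign σ • ∏ i, A s (σ i) i :=
    fun s => Matrix.det_apply _
  simp only [this]
  apply DifferentiableAt.fun_sum
  intro σ _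
  simp only [Units.smul_def, zsmul_eq_mul]
  exact DifferentiableAt.const_mul (DifferentiableAt.fun_finsetProd (fun i _ => h (σ i) i)) _

lemma invDiff' {V : ℝ → Matrix (Fin k) (Fin k) ℂ} {t : ℝ}
    (hVinv : ∀ s, IsUnit (V s))
    (h : ∀ i j, DifferentiableAt ℝ (fun s => V s i j) t) :
    DifferentiableAt ℝ (fun s => (V s)⁻¹) t := by
  rw [show (fun s => (V s)⁻¹) = fun s => ((V s).det)⁻¹ • (V s).adjugate by
    funext s
    rw [Matrix.inv_def, Ring.inverse_eq_inv']]
  apply differentiableAt_pi.2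
  intro i
  apply differentiableAt_pi.2
  intro j
  have hdet : DifferentiableAt ℝ (fun s => (V s).det) t := detDiff' h
  have hdetne : (V t).det ≠ 0 :=
    ((Matrix.isUnit_iff_isUnit_det _).1 (hVinv t)).ne_zero
  have hadj : DifferentiableAt ℝ (fun s => (V s).adjugate i j) t := by
    simp only [Matrix.adjugate_apply]
    apply detDiff'
    intro i' j'
    by_cases hij : i' = j
    · subst hij
      simp only [Matrix.updateRow_self]
      exact differentiableAt_const _
    · simp only [Matrix.updateRow_ne hij]
      exact h i' j'
  exact (hdet.inv hdetne).mul hadj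

/-- Linearization of the matrix equation (3.44) of the paper via the substitution (3.45):
if `V⃛ = cα V + β V̇ + γ V̈` with `V` invertible, then `U := c⁻¹ V⁻¹ V̇` satisfies
`Ü = α·1 + β U + γ(U̇ + c U²) − c(U̇ U + 2 U U̇ + c U³)`. -/
theorem linearization_of_eq_344 (k : ℕ) (α β γ c : ℂ) (hc : c ≠ 0)
    (V V' V'' V''' : ℝ → Matrix (Fin k) (Fin k) ℂ)
    (hVinv : ∀ t, IsUnit (V t))
    (hV : ∀ t, HasDerivAt V (V' t) t)
    (hV' : ∀ t, HasDerivAt V' (V'' t) t)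
    (hV'' : ∀ t, HasDerivAt V'' (V''' t) t)
    (hODE : ∀ t, V''' t = (c * α) • V t + β • V' t + γ • V'' t)
    (U : ℝ → Matrix (Fin k) (Fin k) ℂ)
    (hU : ∀ t, U t = c⁻¹ • ((V t)⁻¹ * V' t)) :
    (∀ t, DifferentiableAt ℝ U t) ∧
    ∀ t, HasDerivAt (deriv U)
      (α • (1 : Matrix (Fin k) (Fin k) ℂ) + β • U t + γ • (deriv U t + c • (U t * U t))
        - c • (deriv U t * U t + (2 : ℂ) • (U t * deriv U t) + c • (U t * U t * U t))) t := by
  set W : ℝ → Matrix (Fin k) (Fin k) ℂ := fun t => (V t)⁻¹ with hWdef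
  have hWdiff : ∀ t, DifferentiableAt ℝ W t := fun t =>
    invDiff' hVinv (fun i j => (entry' (hV t) i j).differentiableAt)
  have hW : ∀ t, HasDerivAt W (deriv W t) t := fun t => (hWdiff t).hasDerivAt
  have hWV : ∀ t, W t * V t = 1 := fun t =>
    Matrix.nonsing_inv_mul _ ((Matrix.isUnit_iff_isUnit_det _).1 (hVinv t))
  have hVW : ∀ t, V t * W t = 1 := fun t =>
    Matrix.mul_nonsing_inv _ ((Matrix.isUnit_iff_isUnit_det _).1 (hVinv t))
  have hW' : ∀ t, deriv W t = -(W t * V' t * W t) := by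
    intro t
    have h1 : HasDerivAt (fun s => W s * V s) (deriv W t * V t + W t * V' t) t :=
      mulDeriv' (hW t) (hV t)
    have h2 : HasDerivAt (fun s => W s * V s) 0 t := by
      rw [show (fun s => W s * V s) = fun _ => (1 : Matrix (Fin k) (Fin k) ℂ) from funext hWV]
      exact hasDerivAt_const _ _
    have h4 : deriv W t * V t = -(W t * V' t) :=
      eq_neg_of_add_eq_zero_left (h1.unique h2)
    calc deriv W t = deriv W t * (V t * W t) := by rw [hVW t, mul_one]
    _ = (deriv W t * V t) * W t := by rw [mul_assoc]
    _ = -(W t * V' t * W t) := by rw [h4, neg_mul]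
  have hUeq : U = fun t => c⁻¹ • (W t * V' t) := funext hU
  have hUd : ∀ t, HasDerivAt U (c⁻¹ • (deriv W t * V' t + W t * V'' t)) t := by
    intro t
    rw [hUeq]
    exact (mulDeriv' (hW t) (hV' t)).const_smul c⁻¹
  refine ⟨fun t => (hUd t).differentiableAt, ?_⟩
  have hderivU : ∀ t, deriv U t = c⁻¹ • (deriv W t * V' t + W t * V'' t) :=
    fun t => (hUd t).deriv
  have hWd2 : ∀ t, HasDerivAt (deriv W)
      (-((deriv W t * V' t + W t * V'' t) * W t + (W t * V' t) * deriv W t)) t := by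
    intro t
    exact ((mulDeriv' (mulDeriv' (hW t) (hV' t)) (hW t)).neg).congr_of_eventuallyEq
      (Filter.Eventually.of_forall hW')
  have hU2 : ∀ t, HasDerivAt (deriv U)
      (c⁻¹ • ((-((deriv W t * V' t + W t * V'' t) * W t + (W t * V' t) * deriv W t)) * V' t
          + deriv W t * V'' t + (deriv W t * V'' t + W t * V''' t))) t := by
    intro t
    exact (((mulDeriv' (hWd2 t) (hV' t)).add (mulDeriv' (hW t) (hV'' t))).const_smul
      c⁻¹).congr_of_eventuallyEq (Filter.Eventually.of_forall hderivU)
  intro t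
  convert hU2 t using 1
  rw [hU t, hderivU t, hW' t, hODE t]
  simp only [mul_add, add_mul, mul_smul_comm, smul_mul_assoc, smul_add, smul_sub, smul_smul,
    neg_mul, mul_neg, neg_neg, neg_add, mul_assoc, mul_one, one_mul, hWV t, hVW t]
  match_scalars <;> field_simp <;> ring
end
end

section
/- Derivation of the integrable matrix equation (3.50): let c be a complex scalar and let A, B : ℝ → (k×k complex matrices) be twice differentiable functions satisfying Ä = c { Ȧ B + B Ȧ − Ȧ A − A Ȧ } and B̈ = c { Ḃ A + A Ḃ − Ḃ B − B Ḃ }. Set S := A + B and D := A − B. Then: (i) the matrix Ṡ + c D² is constant in time, so there exists a constant matrix C with Ṡ = −c ( D² + C ); (ii) D̈ = −c ( Ṡ D + D Ṡ ); and consequently (iii) D satisfies D̈ = c² ( 2 D³ + C D + D C ). -/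
open Matrix

attribute [local instance] Matrix.normedAddCommGroup Matrix.normedSpace

noncomputable section

lemma hasDerivAt_entry {k : ℕ} {f : ℝ → Matrix (Fin k) (Fin k) ℂ}
    {M : Matrix (Fin k) (Fin k) ℂ} {t : ℝ}
    (hf : HasDerivAt f M t) (i j : Fin k) :
    HasDerivAt (fun t => f t i j) (M i j) t := by
  let L : Matrix (Fin k) (Fin k) ℂ →L[ℂ] ℂ :=
    (Matrix.entryLinearMap ℂ ℂ i j).toContinuousLinearMap
  exact ((L.restrictScalars ℝ).hasFDerivAt).comp_hasDerivAt t hf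

/-- Derivation of the integrable matrix equation (3.50) of the paper from the system (3.52)
via the positions (3.53): with `S = A + B`, `D = A − B`, (i) `Ṡ + c D²` is constant in
time; (ii) `D̈ = −c(Ṡ D + D Ṡ)`; (iii) for any constant matrix `C` with
`Ṡ = −c(D² + C)`, one has `D̈ = c²(2D³ + C D + D C)`. -/
theorem derivation_of_eq_350 (k : ℕ) (c : ℂ)
    (A A' A'' B B' B'' : ℝ → Matrix (Fin k) (Fin k) ℂ)
    (hA : ∀ t, HasDerivAt A (A' t) t) (hA' : ∀ t, HasDerivAt A' (A'' t) t)
    (hB : ∀ t, HasDerivAt B (B' t) t) (hB' : ∀ t, HasDerivAt B' (B'' t) t)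
    (hAeq : ∀ t, A'' t = c • (A' t * B t + B t * A' t - A' t * A t - A t * A' t))
    (hBeq : ∀ t, B'' t = c • (B' t * A t + A t * B' t - B' t * B t - B t * B' t))
    (S' D D' D'' : ℝ → Matrix (Fin k) (Fin k) ℂ)
    (hS' : ∀ t, S' t = A' t + B' t)
    (hD : ∀ t, D t = A t - B t)
    (hD' : ∀ t, D' t = A' t - B' t)
    (hD'' : ∀ t, D'' t = A'' t - B'' t) :
    (∀ t₁ t₂, S' t₁ + c • (D t₁ * D t₁) = S' t₂ + c • (D t₂ * D t₂)) ∧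
    (∀ t, D'' t = (-c) • (S' t * D t + D t * S' t)) ∧
    (∀ C : Matrix (Fin k) (Fin k) ℂ,
      (∀ t, S' t = (-c) • (D t * D t + C)) →
      ∀ t, D'' t = (c ^ 2) • ((2 : ℂ) • (D t * D t * D t) + C * D t + D t * C)) := by
  have hS'd : ∀ t, HasDerivAt S' (A'' t + B'' t) t := by
    intro t
    have h : S' = fun t => A' t + B' t := funext hS'
    rw [h]; exact (hA' t).add (hB' t)
  have hDd : ∀ t, HasDerivAt D (D' t) t := by
    intro t
    have h : D = fun t => A t - B t := funext hD
    rw [h, hD' t]; exact (hA t).sub (hB t)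
  have key : ∀ t, A'' t + B'' t + c • (D' t * D t + D t * D' t) = 0 := by
    intro t
    rw [hAeq, hBeq, hD, hD', ← smul_add, ← smul_add,
      show (0 : Matrix (Fin k) (Fin k) ℂ) = c • 0 by simp]
    congr 1
    noncomm_ring
  have part1 : ∀ t₁ t₂, S' t₁ + c • (D t₁ * D t₁) = S' t₂ + c • (D t₂ * D t₂) := by
    intro t₁ t₂
    ext i j
    have hconst := is_const_of_deriv_eq_zero (f := fun t =>
        S' t i j + c * ∑ l, D t i l * D t l j) ?_ ?_ t₁ t₂
    · simpa [Matrix.add_apply, Matrix.smul_apply, Matrix.mul_apply, smul_eq_mul] using hconst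
    · intro t
      exact ((hasDerivAt_entry (hS'd t) i j).add
        ((HasDerivAt.fun_sum fun l _ =>
          (hasDerivAt_entry (hDd t) i l).mul (hasDerivAt_entry (hDd t) l j)).const_mul
            c)).differentiableAt
    · intro t
      have hg : HasDerivAt (fun t => S' t i j + c * ∑ l, D t i l * D t l j)
          ((A'' t + B'' t) i j +
            c * ∑ l, (D' t i l * D t l j + D t i l * D' t l j)) t :=
        (hasDerivAt_entry (hS'd t) i j).add
          ((HasDerivAt.fun_sum fun l _ =>
            (hasDerivAt_entry (hDd t) i l).mul (hasDerivAt_entry (hDd t) l j)).const_mul c)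
      rw [hg.deriv]
      have hk := congrFun (congrFun (key t) i) j
      simpa [Matrix.add_apply, Matrix.smul_apply, Matrix.mul_apply, smul_eq_mul,
        Finset.sum_add_distrib, mul_add] using hk
  have part2 : ∀ t, D'' t = (-c) • (S' t * D t + D t * S' t) := by
    intro t
    rw [hD'', hAeq, hBeq, hS', hD, ← smul_sub, neg_smul, ← smul_neg]
    congr 1
    noncomm_ring
  refine ⟨part1, part2, ?_⟩
  intro C hC t
  rw [part2 t, hC t, smul_mul_assoc, mul_smul_comm, ← smul_add, smul_smul, neg_mul_neg, ← sq]
  congr 1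
  rw [two_smul]
  noncomm_ring
end
end

section
/- Explicit solution of the matrix Riccati equation Ṁ = a M² + b M: let a, b be complex scalars with a ≠ 0 and b ≠ 0, let M₀ be an invertible k×k complex matrix, and let I ⊆ ℝ be an interval containing 0 on which the matrix N(t) := M₀⁻¹ e^{−b t} + (a/b)( e^{−b t} − 1 )·1 is invertible. Then M(t) := N(t)⁻¹ satisfies M(0) = M₀ and Ṁ(t) = a M(t)² + b M(t) for all t in I. -/
open Matrix

attribute [local instance] Matrix.normedAddCommGroup Matrix.normedSpace

noncomputable section

/-- Submultiplicativity (up to a factor `k`) of the entrywise sup norm. -/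
lemma mat_norm_mul_le {k : ℕ} (A B : Matrix (Fin k) (Fin k) ℂ) :
    ‖A * B‖ ≤ k * ‖A‖ * ‖B‖ := by
  have hk : (0:ℝ) ≤ k * ‖A‖ * ‖B‖ := by positivity
  rw [Matrix.norm_le_iff hk]
  intro i j
  calc ‖(A * B) i j‖ = ‖∑ l, A i l * B l j‖ := by rw [Matrix.mul_apply]
    _ ≤ ∑ l, ‖A i l * B l j‖ := norm_sum_le _ _
    _ ≤ ∑ _l : Fin k, ‖A‖ * ‖B‖ := by
        refine Finset.sum_le_sum fun l _ => ?_
        rw [norm_mul]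
        exact mul_le_mul (Matrix.norm_entry_le_entrywise_sup_norm A)
          (Matrix.norm_entry_le_entrywise_sup_norm B) (norm_nonneg _) (norm_nonneg _)
    _ = k * ‖A‖ * ‖B‖ := by
        rw [Finset.sum_const, Finset.card_univ, Fintype.card_fin, nsmul_eq_mul, mul_assoc]

/-- Explicit solution (formula (3.58) of the paper) of the matrix Riccati equation
`Ṁ = a M² + b M` (equation (3.57)): `M(t) = N(t)⁻¹` with
`N(t) = M₀⁻¹ e^{−bt} + (a/b)(e^{−bt} − 1)·1`, on any interval containing `0` on which
`N(t)` is invertible. -/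
theorem solution_matrix_riccati (k : ℕ) (a b : ℂ) (ha : a ≠ 0) (hb : b ≠ 0)
    (M₀ : Matrix (Fin k) (Fin k) ℂ) (hM₀ : IsUnit M₀)
    (I : Set ℝ) (hI : I.OrdConnected) (h0 : (0 : ℝ) ∈ I)
    (Nf : ℝ → Matrix (Fin k) (Fin k) ℂ)
    (hN : ∀ t : ℝ, Nf t = Complex.exp (-b * t) • M₀⁻¹
      + (a / b * (Complex.exp (-b * t) - 1)) • (1 : Matrix (Fin k) (Fin k) ℂ))
    (hNinv : ∀ t ∈ I, IsUnit (Nf t))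
    (M : ℝ → Matrix (Fin k) (Fin k) ℂ)
    (hM : ∀ t, M t = (Nf t)⁻¹) :
    M 0 = M₀ ∧
    ∀ t ∈ I, HasDerivWithinAt M (a • (M t * M t) + b • M t) I t := by
  have hM₀det : IsUnit M₀.det := (Matrix.isUnit_iff_isUnit_det M₀).mp hM₀
  have hNfun : Nf = fun y : ℝ => Complex.exp (-b * y) • M₀⁻¹
      + (a / b * (Complex.exp (-b * y) - 1)) • (1 : Matrix (Fin k) (Fin k) ℂ) := funext hN
  have hMfun : M = fun s : ℝ => (Nf s)⁻¹ := funext hM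
  -- initial condition
  have hN0 : Nf 0 = M₀⁻¹ := by rw [hN 0]; simp
  have hinit : M 0 = M₀ := by
    rw [hM 0, hN0, Matrix.nonsing_inv_nonsing_inv _ hM₀det]
  refine ⟨hinit, fun t ht => ?_⟩
  -- derivative of Nf
  set N' : ℝ → Matrix (Fin k) (Fin k) ℂ := fun s =>
    (-b * Complex.exp (-b * s)) • M₀⁻¹
      + (a / b * (-b * Complex.exp (-b * s))) • (1 : Matrix (Fin k) (Fin k) ℂ) with hN'def
  have hexp : ∀ s : ℝ, HasDerivAt (fun y : ℝ => Complex.exp (-b * y))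
      (-b * Complex.exp (-b * s)) s := by
    intro s
    have h1 : HasDerivAt (fun z : ℂ => Complex.exp (-b * z))
        (Complex.exp (-b * (s:ℂ)) * (-b)) (s:ℂ) := by
      simpa [Function.comp_def] using (Complex.hasDerivAt_exp (-b * (s:ℂ))).comp (s:ℂ)
        ((hasDerivAt_id (s:ℂ)).const_mul (-b))
    simpa [mul_comm] using h1.comp_ofReal
  have hNd : ∀ s : ℝ, HasDerivAt Nf (N' s) s := by
    intro s
    rw [hNfun]
    exact ((hexp s).smul_const M₀⁻¹).add
      ((((hexp s).sub_const 1).const_mul (a / b)).smul_const 1)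
  -- invertibility facts
  have hdet : ∀ s ∈ I, IsUnit (Nf s).det := fun s hs =>
    (Matrix.isUnit_iff_isUnit_det (Nf s)).mp (hNinv s hs)
  have hMN : ∀ s ∈ I, M s * Nf s = 1 := fun s hs => by
    rw [hM s]; exact Matrix.nonsing_inv_mul _ (hdet s hs)
  have hNM : ∀ s ∈ I, Nf s * M s = 1 := fun s hs => by
    rw [hM s]; exact Matrix.mul_nonsing_inv _ (hdet s hs)
  -- the target derivative equals -(M t * N' t * M t)
  have hN'eq : N' t = -(b • Nf t + a • (1 : Matrix (Fin k) (Fin k) ℂ)) := by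
    rw [hN'def, hN t]
    match_scalars <;> field_simp <;> ring
  have hDeq : -(M t * N' t * M t) = b • M t + a • (M t * M t) := by
    rw [hN'eq]
    simp only [Matrix.mul_neg, Matrix.neg_mul, neg_neg, Matrix.mul_add, Matrix.add_mul,
      Matrix.mul_smul, Matrix.smul_mul, Matrix.mul_one]
    rw [Matrix.mul_assoc, hNM t ht, Matrix.mul_one]
  have hgoal : a • (M t * M t) + b • M t = -(M t * N' t * M t) := by
    rw [hDeq, add_comm]
  rw [hgoal]
  -- continuity of M at t
  have hMc : ContinuousAt M t := by
    have hNc : ContinuousAt Nf t := (hNd t).continuousAt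
    have hinv : ContinuousAt Inv.inv (Nf t) := by
      refine continuousAt_matrix_inv (Nf t) ?_
      have hld : (Nf t).det ≠ 0 := (hdet t ht).ne_zero
      have : ContinuousAt (fun z : ℂ => z⁻¹) (Nf t).det := continuousAt_inv₀ hld
      simpa [Ring.inverse_eq_inv'] using this
    rw [hMfun]
    exact hinv.comp hNc
  have hMcw : Filter.Tendsto M (nhdsWithin t I) (nhds (M t)) :=
    hMc.continuousWithinAt
  -- little-o statement for N
  have hE : (fun s => Nf s - Nf t - (s - t) • N' t) =o[nhdsWithin t I] fun s => s - t :=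
    hasDerivWithinAt_iff_isLittleO.mp ((hNd t).hasDerivWithinAt)
  refine (hasDerivWithinAt_iff_isLittleO).mpr ?_
  -- decompose the difference quotient remainder
  have hdecomp : ∀ s ∈ I,
      M s - M t - (s - t) • (-(M t * N' t * M t)) =
        -(M s * (Nf s - Nf t - (s - t) • N' t) * M t)
          + (s - t) • ((M t - M s) * N' t * M t) := by
    intro s hs
    have h1 : M s * Nf s = 1 := hMN s hs
    have h2 : Nf t * M t = 1 := hNM t ht
    have key : M s - M t = M s * (Nf t - Nf s) * M t := by
      rw [Matrix.mul_sub, Matrix.sub_mul, Matrix.mul_assoc, h2, Matrix.mul_one, h1,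
        Matrix.one_mul]
    rw [smul_neg, sub_neg_eq_add]
    rw [Matrix.mul_sub, Matrix.mul_sub, Matrix.sub_mul, Matrix.sub_mul]
    rw [Matrix.mul_assoc (M s) (Nf s) (M t), Matrix.mul_assoc (M s) (Nf t) (M t)]
    rw [← Matrix.mul_assoc (M s) (Nf s) (M t), h1, Matrix.one_mul]
    rw [Matrix.mul_smul, Matrix.smul_mul, Matrix.sub_mul, Matrix.sub_mul]
    -- now pure module algebra
    have hms : M s * (Nf t * M t) = M s := by rw [h2, Matrix.mul_one]
    rw [hms]
    module
  have heq : (fun s => M s - M t - (s - t) • (-(M t * N' t * M t))) =ᶠ[nhdsWithin t I]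
      fun s => -(M s * (Nf s - Nf t - (s - t) • N' t) * M t)
        + (s - t) • ((M t - M s) * N' t * M t) := by
    filter_upwards [self_mem_nhdsWithin] with s hs using hdecomp s hs
  rw [Asymptotics.isLittleO_congr heq (Filter.EventuallyEq.refl _ _)]
  -- first piece: o(s - t)
  have hpiece1 : (fun s => -(M s * (Nf s - Nf t - (s - t) • N' t) * M t))
      =o[nhdsWithin t I] fun s => s - t := by
    refine Asymptotics.IsLittleO.neg_left ?_
    have hbig : (fun s => M s * (Nf s - Nf t - (s - t) • N' t) * M t)
        =O[nhdsWithin t I] fun s => Nf s - Nf t - (s - t) • N' t := by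
      rw [Asymptotics.isBigO_iff]
      refine ⟨(k * (‖M t‖ + 1)) * (k * ‖M t‖) , ?_⟩
      have hev : ∀ᶠ s in nhdsWithin t I, ‖M s‖ ≤ ‖M t‖ + 1 := by
        have : Filter.Tendsto (fun s => ‖M s‖) (nhdsWithin t I) (nhds ‖M t‖) := hMcw.norm
        exact this.eventually_le_const (by linarith)
      filter_upwards [hev] with s hs
      set E := Nf s - Nf t - (s - t) • N' t
      calc ‖M s * E * M t‖ ≤ k * ‖M s * E‖ * ‖M t‖ := mat_norm_mul_le _ _
        _ ≤ k * (k * ‖M s‖ * ‖E‖) * ‖M t‖ := by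
            have := mat_norm_mul_le (M s) E
            gcongr
        _ ≤ k * (k * (‖M t‖ + 1) * ‖E‖) * ‖M t‖ := by gcongr
        _ = (k * (‖M t‖ + 1)) * (k * ‖M t‖) * ‖E‖ := by ring
        _ ≤ (k * (‖M t‖ + 1)) * (k * ‖M t‖) * ‖E‖ := le_refl _
    exact hbig.trans_isLittleO hE
  -- second piece: o(s - t)
  have hpiece2 : (fun s => (s - t) • ((M t - M s) * N' t * M t))
      =o[nhdsWithin t I] fun s => s - t := by
    have hw : Filter.Tendsto (fun s => (M t - M s) * N' t * M t) (nhdsWithin t I)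
        (nhds 0) := by
      have h1 : Filter.Tendsto (fun s => M t - M s) (nhdsWithin t I) (nhds 0) := by
        have := Filter.Tendsto.sub (tendsto_const_nhds (x := M t)) hMcw
        simpa using this
      have h2 := h1.mul (tendsto_const_nhds (x := N' t))
      have h3 := h2.mul (tendsto_const_nhds (x := M t))
      simpa using h3
    rw [Asymptotics.isLittleO_iff]
    intro c hc
    have hev : ∀ᶠ s in nhdsWithin t I, ‖(M t - M s) * N' t * M t‖ ≤ c := by
      have : Filter.Tendsto (fun s => ‖(M t - M s) * N' t * M t‖) (nhdsWithin t I)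
          (nhds 0) := by simpa using hw.norm
      exact this.eventually_le_const hc
    filter_upwards [hev] with s hs
    rw [norm_smul, Real.norm_eq_abs]
    calc |s - t| * ‖(M t - M s) * N' t * M t‖ ≤ |s - t| * c := by
          gcongr
      _ = c * ‖s - t‖ := by rw [Real.norm_eq_abs]; ring
  exact hpiece1.add hpiece2
end
end

section
/- Conservation laws for the one-body equation r̈ = h(t) r ∧ ṙ: let h : ℝ → ℝ be continuous and let r : ℝ → ℝ³ be twice differentiable satisfying r̈(t) = h(t) ( r(t) × ṙ(t) ) for all t. Then the speed is conserved, |ṙ(t)| = |ṙ(0)| for all t, and the squared distance from the origin is exactly quadratic in time: |r(t)|² = |r(0)|² + 2 ( r(0) · ṙ(0) ) t + |ṙ(0)|² t² for all t. -/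
open scoped RealInnerProductSpace

noncomputable section

/-- The cross product of two vectors in `ℝ³` (`EuclideanSpace ℝ (Fin 3)`). -/
noncomputable def cross3 (u v : EuclideanSpace ℝ (Fin 3)) : EuclideanSpace ℝ (Fin 3) :=
  WithLp.toLp 2 ![u 1 * v 2 - u 2 * v 1, u 2 * v 0 - u 0 * v 2, u 0 * v 1 - u 1 * v 0]

lemma inner_cross_left (u v : EuclideanSpace ℝ (Fin 3)) : ⟪u, cross3 u v⟫ = 0 := by
  simp only [PiLp.inner_apply, RCLike.inner_apply, conj_trivial, Fin.sum_univ_three, cross3]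
  show (u 1 * v 2 - u 2 * v 1) * u 0 + (u 2 * v 0 - u 0 * v 2) * u 1
      + (u 0 * v 1 - u 1 * v 0) * u 2 = 0
  ring

lemma inner_cross_right (u v : EuclideanSpace ℝ (Fin 3)) : ⟪v, cross3 u v⟫ = 0 := by
  simp only [PiLp.inner_apply, RCLike.inner_apply, conj_trivial, Fin.sum_univ_three, cross3]
  show (u 1 * v 2 - u 2 * v 1) * v 0 + (u 2 * v 0 - u 0 * v 2) * v 1
      + (u 0 * v 1 - u 1 * v 0) * v 2 = 0
  ring

lemma const_aux (f f' : ℝ → ℝ) (hf : ∀ t, HasDerivAt f (f' t) t)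
    (h0 : ∀ t, f' t = 0) : ∀ t, f t = f 0 := by
  intro t
  exact is_const_of_deriv_eq_zero (fun x => (hf x).differentiableAt)
    (fun x => by rw [(hf x).deriv]; exact h0 x) t 0

/-- Conservation laws (A.14a), (A.14b) of the paper for the one-body equation
`r̈ = h(t) r ∧ ṙ`: the speed `‖ṙ‖` is conserved and `‖r‖²` is exactly quadratic in time. -/
theorem conservation_laws_angular_force (h : ℝ → ℝ) (hh : Continuous h)
    (r r' r'' : ℝ → EuclideanSpace ℝ (Fin 3))
    (hr : ∀ t, HasDerivAt r (r' t) t)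
    (hr' : ∀ t, HasDerivAt r' (r'' t) t)
    (hODE : ∀ t, r'' t = h t • cross3 (r t) (r' t)) :
    (∀ t, ‖r' t‖ = ‖r' 0‖) ∧
    (∀ t, ‖r t‖ ^ 2 = ‖r 0‖ ^ 2 + 2 * ⟪r 0, r' 0⟫ * t + ‖r' 0‖ ^ 2 * t ^ 2) := by
  have hperp' : ∀ t, ⟪r' t, r'' t⟫ = 0 := by
    intro t
    rw [hODE t, real_inner_smul_right, inner_cross_right, mul_zero]
  have hperp : ∀ t, ⟪r t, r'' t⟫ = 0 := by
    intro t
    rw [hODE t, real_inner_smul_right, inner_cross_left, mul_zero]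
  -- speed conservation
  have hspeed2 : ∀ t, ⟪r' t, r' t⟫ = ⟪r' 0, r' 0⟫ := by
    apply const_aux (fun t => ⟪r' t, r' t⟫) (fun t => 2 * ⟪r' t, r'' t⟫)
    · intro t
      have := (hr' t).inner ℝ (hr' t)
      refine this.congr_deriv ?_
      rw [real_inner_comm (r'' t) (r' t)]; ring
    · intro t; rw [hperp' t]; ring
  have hspeed : ∀ t, ‖r' t‖ = ‖r' 0‖ := by
    intro t
    have := hspeed2 t
    rw [real_inner_self_eq_norm_sq, real_inner_self_eq_norm_sq] at this
    nlinarith [norm_nonneg (r' t), norm_nonneg (r' 0), this]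
  refine ⟨hspeed, ?_⟩
  -- ⟪r t, r' t⟫ is affine
  have hq : ∀ t, ⟪r t, r' t⟫ = ⟪r 0, r' 0⟫ + ‖r' 0‖ ^ 2 * t := by
    have := const_aux (fun t => ⟪r t, r' t⟫ - ‖r' 0‖ ^ 2 * t)
      (fun t => ⟪r t, r'' t⟫ + ⟪r' t, r' t⟫ - ‖r' 0‖ ^ 2 * 1) ?_ ?_
    · intro t
      have := this t
      simp only [mul_zero, sub_zero] at this
      linarith
    · intro t
      exact ((hr t).inner ℝ (hr' t)).sub
        ((hasDerivAt_id t).const_mul (‖r' 0‖ ^ 2))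
    · intro t
      show ⟪r t, r'' t⟫ + ⟪r' t, r' t⟫ - ‖r' 0‖ ^ 2 * 1 = 0
      rw [hperp t, hspeed2 t, real_inner_self_eq_norm_sq]
      ring
  -- ‖r t‖² quadratic
  have hfinal := const_aux
    (fun t => ⟪r t, r t⟫ - (2 * ⟪r 0, r' 0⟫ * t + ‖r' 0‖ ^ 2 * t ^ 2))
    (fun t => (⟪r t, r' t⟫ + ⟪r' t, r t⟫) - (2 * ⟪r 0, r' 0⟫ * 1 + ‖r' 0‖ ^ 2 * (2 * t)))
    ?_ ?_
  · intro t
    have := hfinal t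
    simp only [mul_zero, mul_one, add_zero, sub_zero] at this
    rw [real_inner_self_eq_norm_sq, real_inner_self_eq_norm_sq] at this
    simp only [pow_two] at *
    linarith
  · intro t
    refine ((hr t).inner ℝ (hr t)).sub ?_
    have h1 : HasDerivAt (fun t : ℝ => 2 * ⟪r 0, r' 0⟫ * t) (2 * ⟪r 0, r' 0⟫ * 1) t :=
      by simpa using (hasDerivAt_id t).const_mul (2 * ⟪r 0, r' 0⟫)
    have h2 : HasDerivAt (fun t : ℝ => ‖r' 0‖ ^ 2 * t ^ 2) (‖r' 0‖ ^ 2 * (2 * t)) t := by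
      simpa using ((hasDerivAt_pow 2 t)).const_mul (‖r' 0‖ ^ 2)
    exact h1.add h2
  · intro t
    show ⟪r t, r' t⟫ + ⟪r' t, r t⟫ - (2 * ⟪r 0, r' 0⟫ * 1 + ‖r' 0‖ ^ 2 * (2 * t)) = 0
    rw [real_inner_comm (r t) (r' t), hq t]
    ring
end
end

section
/- Third-order linear reduction of the one-body equation r̈ = h(t) r ∧ ṙ: let h : ℝ → ℝ be differentiable and let r : ℝ → ℝ³ be twice differentiable satisfying r̈(t) = h(t) ( r(t) × ṙ(t) ) for all t. Then r is three times differentiable and satisfies r⃛(t) = ḣ(t) ( r(t) × ṙ(t) ) + h(t)² [ r(t) ( r(t) · ṙ(t) ) − |r(t)|² ṙ(t) ] for all t. -/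
open scoped RealInnerProductSpace

noncomputable section

lemma euclid_deriv_iff {f : ℝ → EuclideanSpace ℝ (Fin 3)} {v : EuclideanSpace ℝ (Fin 3)} {t : ℝ} :
    HasDerivAt f v t ↔ ∀ i, HasDerivAt (fun s => f s i) (v i) t := by
  constructor
  · intro H i
    exact (EuclideanSpace.proj i (𝕜 := ℝ)).hasFDerivAt.comp_hasDerivAt t H
  · intro H
    have h1 : HasDerivAt (fun s => (fun i => f s i : Fin 3 → ℝ)) (fun i => v i) t :=
      hasDerivAt_pi.2 H
    exact ((EuclideanSpace.equiv (Fin 3) ℝ).symm.toContinuousLinearMap.hasFDerivAt).comp_hasDerivAt t h1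

/-- Third-order linear reduction (equation (A.16) of the paper) of the one-body equation
`r̈ = h(t) r ∧ ṙ`: `r⃛ = ḣ (r × ṙ) + h² [ r (r·ṙ) − ‖r‖² ṙ ]`. -/
theorem third_order_reduction_angular_force (h : ℝ → ℝ) (hh : Differentiable ℝ h)
    (r r' r'' : ℝ → EuclideanSpace ℝ (Fin 3))
    (hr : ∀ t, HasDerivAt r (r' t) t)
    (hr' : ∀ t, HasDerivAt r' (r'' t) t)
    (hODE : ∀ t, r'' t = h t • cross3 (r t) (r' t)) :
    ∀ t, HasDerivAt r''
      (deriv h t • cross3 (r t) (r' t)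
        + h t ^ 2 • (⟪r t, r' t⟫ • r t - ‖r t‖ ^ 2 • r' t)) t := by
  intro t
  have hrc : ∀ i, HasDerivAt (fun s => r s i) (r' t i) t := euclid_deriv_iff.1 (hr t)
  have hrc' : ∀ i, HasDerivAt (fun s => r' s i) (h t * cross3 (r t) (r' t) i) t := by
    intro i
    have := euclid_deriv_iff.1 (hr' t) i
    rwa [hODE t, PiLp.smul_apply, smul_eq_mul] at this
  have hfun : r'' = fun s => h s • cross3 (r s) (r' s) := funext hODE
  rw [hfun]
  have hinner : ⟪r t, r' t⟫ = r t 0 * r' t 0 + r t 1 * r' t 1 + r t 2 * r' t 2 := by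
    simp [PiLp.inner_apply, RCLike.inner_apply, Fin.sum_univ_three, mul_comm]
  have hnorm : ‖r t‖ ^ 2 = r t 0 * r t 0 + r t 1 * r t 1 + r t 2 * r t 2 := by
    rw [← real_inner_self_eq_norm_sq]
    simp only [PiLp.inner_apply, RCLike.inner_apply, Fin.sum_univ_three, conj_trivial]
  apply euclid_deriv_iff.2
  intro i
  have hd := (hh t).hasDerivAt
  fin_cases i <;>
  · simp only [cross3, PiLp.smul_apply, PiLp.add_apply, PiLp.sub_apply, smul_eq_mul,
      Matrix.cons_val_zero, Matrix.cons_val_one, Matrix.head_cons, Matrix.cons_val_two,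
      Matrix.tail_cons, Fin.isValue, hinner, hnorm, Fin.zero_eta, Fin.mk_one,
      Fin.reduceFinMk]
    convert hd.fun_mul (((hrc _).fun_mul (hrc' _)).fun_sub ((hrc _).fun_mul (hrc' _))) using 1
    · rfl
    · rfl
    simp only [cross3, Matrix.cons_val_zero, Matrix.cons_val_one, Matrix.head_cons,
      Matrix.cons_val_two, Matrix.tail_cons, Fin.isValue, Fin.zero_eta, Fin.mk_one,
      Fin.reduceFinMk, WithLp.ofLp_toLp]
    ring
end
end

section
/- Change of variables solving (B.1) with b = −(8/9)a²: let a, c be complex scalars with a ≠ 0, and let V : ℝ → (k×k complex matrices) be twice differentiable satisfying V''(τ) = c [ V'(τ), V(τ) ] for all τ (primes denoting derivatives in τ). Define τ(t) := ( e^{2at/3} − 1 ) / (2a/3) and U(t) := e^{2at/3} V( τ(t) ). Then U satisfies Ü = 2a U̇ − (8/9) a² U + c [ U̇, U ]. -/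
open Matrix

attribute [local instance] Matrix.normedAddCommGroup Matrix.normedSpace

noncomputable section

/-- Change of variables (B.6b), (B.6c) of Appendix B of the paper: if `V'' = c[V',V]`
(derivatives in the complex variable `τ`), then `U(t) := e^{2at/3} V(τ(t))` with
`τ(t) = (e^{2at/3} − 1)/(2a/3)` satisfies `Ü = 2a U̇ − (8/9)a² U + c[U̇,U]`. -/
theorem change_of_variables_B6 (k : ℕ) (a c : ℂ) (ha : a ≠ 0)
    (V V' : ℂ → Matrix (Fin k) (Fin k) ℂ)
    (hV : ∀ τ : ℂ, HasDerivAt V (V' τ) τ)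
    (hV' : ∀ τ : ℂ, HasDerivAt V' (c • (V' τ * V τ - V τ * V' τ)) τ)
    (τ : ℝ → ℂ)
    (hτ : ∀ t : ℝ, τ t = (Complex.exp (2 * a * t / 3) - 1) / (2 * a / 3))
    (U : ℝ → Matrix (Fin k) (Fin k) ℂ)
    (hU : ∀ t : ℝ, U t = Complex.exp (2 * a * t / 3) • V (τ t)) :
    (∀ t, DifferentiableAt ℝ U t) ∧
    ∀ t : ℝ, HasDerivAt (deriv U)
      ((2 * a) • deriv U t - (8 / 9 * a ^ 2) • U t
        + c • (deriv U t * U t - U t * deriv U t)) t := by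
  set E : ℝ → ℂ := fun t => Complex.exp (2 * a * t / 3) with hE_def
  have hE : ∀ t : ℝ, HasDerivAt E (2 * a / 3 * E t) t := by
    intro t
    have hid : HasDerivAt (fun t : ℝ => (t : ℂ)) 1 t := by
      simpa using (hasDerivAt_id t).ofReal_comp
    have h1 : HasDerivAt (fun t : ℝ => 2 * a * (t : ℂ) / 3) (2 * a / 3) t := by
      have := (hid.const_mul (2 * a)).div_const 3
      simpa using this
    have h2 := (Complex.hasDerivAt_exp (2 * a * (t : ℂ) / 3)).scomp t h1
    simpa [hE_def, Function.comp_def, smul_eq_mul] using h2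
  have hτ' : ∀ t : ℝ, HasDerivAt τ (E t) t := by
    intro t
    have hτfun : τ = fun t : ℝ => (E t - 1) / (2 * a / 3) := funext hτ
    rw [hτfun]
    have h := ((hE t).sub_const 1).div_const (2 * a / 3)
    convert h using 1
    case e'_9 =>
      have h3 : (2 * a / 3 : ℂ) ≠ 0 := by
        exact div_ne_zero (mul_ne_zero two_ne_zero ha) three_ne_zero
      exact (mul_div_cancel_left₀ _ h3).symm
    all_goals rfl
  have hVc : ∀ t : ℝ, HasDerivAt (fun t : ℝ => V (τ t)) (E t • V' (τ t)) t :=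
    fun t => (hV (τ t)).scomp t (hτ' t)
  have hV'c : ∀ t : ℝ, HasDerivAt (fun t : ℝ => V' (τ t))
      (E t • (c • (V' (τ t) * V (τ t) - V (τ t) * V' (τ t)))) t :=
    fun t => (hV' (τ t)).scomp t (hτ' t)
  have hUfun : U = fun t : ℝ => E t • V (τ t) := funext hU
  have hU' : ∀ t : ℝ, HasDerivAt U
      (E t • (E t • V' (τ t)) + (2 * a / 3 * E t) • V (τ t)) t := by
    intro t
    rw [hUfun]
    exact (hE t).smul (hVc t)
  have hderiv : deriv U = fun t : ℝ =>
      E t • (E t • V' (τ t)) + (2 * a / 3 * E t) • V (τ t) :=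
    funext fun t => (hU' t).deriv
  refine ⟨fun t => (hU' t).differentiableAt, fun t => ?_⟩
  have hinner : HasDerivAt (fun t : ℝ => E t • V' (τ t))
      (E t • (E t • (c • (V' (τ t) * V (τ t) - V (τ t) * V' (τ t))))
        + (2 * a / 3 * E t) • V' (τ t)) t :=
    (hE t).smul (hV'c t)
  have hterm1 : HasDerivAt (fun t : ℝ => E t • (E t • V' (τ t)))
      (E t • (E t • (E t • (c • (V' (τ t) * V (τ t) - V (τ t) * V' (τ t))))
        + (2 * a / 3 * E t) • V' (τ t))
        + (2 * a / 3 * E t) • (E t • V' (τ t))) t :=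
    (hE t).smul hinner
  have hterm2 : HasDerivAt (fun t : ℝ => (2 * a / 3 * E t) • V (τ t))
      ((2 * a / 3 * E t) • (E t • V' (τ t))
        + (2 * a / 3 * (2 * a / 3 * E t)) • V (τ t)) t :=
    ((hE t).const_mul (2 * a / 3)).smul (hVc t)
  have htot := hterm1.add hterm2
  rw [hderiv]
  convert htot using 1
  case e'_9 =>
    rw [hU t]
    set e := E t
    set P := V (τ t)
    set Q := V' (τ t)
    simp only [smul_smul, smul_sub, smul_add, smul_mul_assoc, mul_smul_comm,
      add_mul, mul_add, sub_mul, mul_sub]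
    match_scalars <;> ring
  all_goals rfl
end
end

section
/- Conserved total angular-type vector for the Hamiltonian N-body system (F.8a): let N ≥ 1, let λ ∈ ℝ and let (a_{nm}), (b_{nm}), (c_{nm}) be real N×N arrays with b_{nm} = b_{mn} and c_{nm} = c_{mn}, and let q_n, p_n : ℝ → ℝ³ (n = 1,…,N) be differentiable functions satisfying q̇_n = Σ_{m=1}^{N} ( a_{nm} q_m + b_{nm} p_m + 4λ [ q_n × ( q_m × p_m ) ] ) and ṗ_n = Σ_{m=1}^{N} ( c_{nm} q_m − a_{mn} p_m + 4λ [ p_n × ( q_m × p_m ) ] ). Then the vector Σ_{m=1}^{N} q_m(t) × p_m(t) is constant in time. -/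
open Matrix

set_option linter.unnecessarySeqFocus false in
lemma hasDerivAt_cross {u v : ℝ → Fin 3 → ℝ} {u' v' : Fin 3 → ℝ} {t : ℝ}
    (hu : HasDerivAt u u' t) (hv : HasDerivAt v v' t) :
    HasDerivAt (fun s => crossProduct (u s) (v s))
      (crossProduct u' (v t) + crossProduct (u t) v') t := by
  rw [hasDerivAt_pi] at hu hv ⊢
  intro i
  fin_cases i
  · simp only [cross_apply, Pi.add_apply,
      show ((⟨0, by omega⟩ : Fin 3)) = 0 from rfl, Matrix.cons_val_zero]
    convert (((hu 1).fun_mul (hv 2)).fun_sub ((hu 2).fun_mul (hv 1))) using 1 <;> ring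
  · simp only [cross_apply, Pi.add_apply,
      show ((⟨1, by omega⟩ : Fin 3)) = 1 from rfl,
      Matrix.cons_val_one, Matrix.head_cons, Matrix.cons_val_zero]
    convert (((hu 2).fun_mul (hv 0)).fun_sub ((hu 0).fun_mul (hv 2))) using 1 <;> ring
  · simp only [cross_apply, Pi.add_apply,
      show ((⟨2, by omega⟩ : Fin 3)) = 2 from rfl,
      Matrix.cons_val_two, Matrix.tail_cons, Matrix.head_cons]
    convert (((hu 0).fun_mul (hv 1)).fun_sub ((hu 1).fun_mul (hv 0))) using 1 <;> ring

lemma cross_pair (u v x : Fin 3 → ℝ) :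
    crossProduct (crossProduct u x) v + crossProduct u (crossProduct v x)
      = crossProduct (crossProduct u v) x := by
  have h := leibniz_cross u v x
  have h2 := cross_anticomm (crossProduct u x) v
  rw [h, ← h2]
  abel

/-- The key algebraic identity at a fixed time. -/
lemma key_zero (N : ℕ) (lam : ℝ) (a b c : Fin N → Fin N → ℝ)
    (hb : ∀ n m, b n m = b m n) (hc : ∀ n m, c n m = c m n)
    (q p : Fin N → Fin 3 → ℝ) :
    ∑ n, (crossProduct (∑ m, (a n m • q m + b n m • p m
          + (4 * lam) • crossProduct (q n) (crossProduct (q m) (p m)))) (p n)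
      + crossProduct (q n) (∑ m, (c n m • q m - a m n • p m
          + (4 * lam) • crossProduct (p n) (crossProduct (q m) (p m))))) = 0 := by
  -- reduce to a double sum of pointwise terms
  have expand : ∀ n : Fin N,
      crossProduct (∑ m, (a n m • q m + b n m • p m
          + (4 * lam) • crossProduct (q n) (crossProduct (q m) (p m)))) (p n)
      + crossProduct (q n) (∑ m, (c n m • q m - a m n • p m
          + (4 * lam) • crossProduct (p n) (crossProduct (q m) (p m))))
      = ∑ m, (crossProduct (a n m • q m + b n m • p m
          + (4 * lam) • crossProduct (q n) (crossProduct (q m) (p m))) (p n)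
        + crossProduct (q n) (c n m • q m - a m n • p m
          + (4 * lam) • crossProduct (p n) (crossProduct (q m) (p m)))) := by
    intro n
    rw [map_sum, LinearMap.sum_apply, map_sum, ← Finset.sum_add_distrib]
  simp only [expand]
  set f : Fin N → Fin N → (Fin 3 → ℝ) := fun n m =>
    crossProduct (a n m • q m + b n m • p m
          + (4 * lam) • crossProduct (q n) (crossProduct (q m) (p m))) (p n)
        + crossProduct (q n) (c n m • q m - a m n • p m
          + (4 * lam) • crossProduct (p n) (crossProduct (q m) (p m))) with hf
  have hsym : ∀ n m, f n m + f m n = 0 := by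
    intro n m
    simp only [hf, map_add, map_sub, _root_.map_smul, LinearMap.add_apply, LinearMap.sub_apply,
      LinearMap.smul_apply]
    have e1 := cross_pair (q n) (p n) (crossProduct (q m) (p m))
    have e2 := cross_pair (q m) (p m) (crossProduct (q n) (p n))
    have h1 := cross_anticomm' (p m) (p n)
    have h2 := cross_anticomm' (q n) (q m)
    have h3 := cross_anticomm' (crossProduct (q n) (p n)) (crossProduct (q m) (p m))
    rw [hb n m, hc n m]
    -- combine everything linearly
    have : crossProduct (crossProduct (q n) (crossProduct (q m) (p m))) (p n)
        + crossProduct (q n) (crossProduct (p n) (crossProduct (q m) (p m)))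
        + (crossProduct (crossProduct (q m) (crossProduct (q n) (p n))) (p m)
        + crossProduct (q m) (crossProduct (p m) (crossProduct (q n) (p n)))) = 0 := by
      rw [e1, e2]; exact h3
    linear_combination (norm := module)
      (b m n) • h1 + (c m n) • h2 + (4 * lam) • this
  have hsum : (∑ n, ∑ m, f n m) + (∑ n, ∑ m, f n m) = 0 := by
    conv_lhs => rw [show (∑ n, ∑ m, f n m) + (∑ n, ∑ m, f n m)
      = (∑ n, ∑ m, f n m) + (∑ m, ∑ n, f n m) from by rw [Finset.sum_comm]]
    rw [← Finset.sum_add_distrib]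
    simp only [← Finset.sum_add_distrib]
    exact Finset.sum_eq_zero fun n _ => Finset.sum_eq_zero fun m _ => hsym n m
  have h2 : (2 : ℝ) • (∑ n, ∑ m, f n m) = 0 := by rw [two_smul]; exact hsum
  have := smul_eq_zero.mp h2
  rcases this with h | h
  · norm_num at h
  · exact h


/-- Conserved total angular-type vector for the Hamiltonian `N`-body system (F.8a)
(equivalently (2.31)) of the paper: under the stated equations of motion (with `b` and `c`
symmetric), the vector `Σ_m q_m × p_m` is constant in time. -/
theorem conserved_angular_vector (N : ℕ) (hN : 1 ≤ N) (lam : ℝ)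
    (a b c : Fin N → Fin N → ℝ)
    (hb : ∀ n m, b n m = b m n) (hc : ∀ n m, c n m = c m n)
    (q p : Fin N → ℝ → (Fin 3 → ℝ))
    (hq : ∀ n t, HasDerivAt (q n)
      (∑ m, (a n m • q m t + b n m • p m t
        + (4 * lam) • crossProduct (q n t) (crossProduct (q m t) (p m t)))) t)
    (hp : ∀ n t, HasDerivAt (p n)
      (∑ m, (c n m • q m t - a m n • p m t
        + (4 * lam) • crossProduct (p n t) (crossProduct (q m t) (p m t)))) t) :
    ∀ t₁ t₂ : ℝ, ∑ m, crossProduct (q m t₁) (p m t₁)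
      = ∑ m, crossProduct (q m t₂) (p m t₂) := by
  set F : ℝ → (Fin 3 → ℝ) := fun t => ∑ m, crossProduct (q m t) (p m t) with hF
  have hderiv : ∀ t, HasDerivAt F 0 t := by
    intro t
    have h : HasDerivAt F
        (∑ n, (crossProduct (∑ m, (a n m • q m t + b n m • p m t
            + (4 * lam) • crossProduct (q n t) (crossProduct (q m t) (p m t)))) (p n t)
          + crossProduct (q n t) (∑ m, (c n m • q m t - a m n • p m t
            + (4 * lam) • crossProduct (p n t) (crossProduct (q m t) (p m t)))))) t :=
      HasDerivAt.fun_sum fun n _ => hasDerivAt_cross (hq n t) (hp n t)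
    rwa [key_zero N lam a b c hb hc (fun m => q m t) (fun m => p m t)] at h
  intro t₁ t₂
  have hdiff : Differentiable ℝ F := fun t => (hderiv t).differentiableAt
  have hfz : ∀ t, fderiv ℝ F t = 0 := by
    intro t
    have := (hderiv t).hasFDerivAt.fderiv
    rw [this]
    ext x
    simp
  exact is_const_of_fderiv_eq_zero hdiff hfz t₁ t₂
end
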